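/- Let 1/n ≪ α ≪ γ ≪ 1/r. Let G be an r-partite graph on (V_1,...,V_r) with all classes of size n, with every vertex v∉V_j satisfying d(v,V_j) ≥ (1/2+2γ/r)n, and suppose |d_G(v,V_{j_1}) - d_G(v,V_{j_2})| < αn for all j_1,j_2 and all v∉V_{j_1}∪V_{j_2}. Then there exists a subgraph H ⊆ G with maximum degree Δ(H) ≤ γn such that G−H is K_r-divisible. -/

import Mathlib

open Finset
namespace Stmt6Aux

variable {β : Type*} [DecidableEq β]

def degA (E : Finset (β × β)) (x : β) : ℕ := #(E.filter fun p => p.1 = x)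
def degB (E : Finset (β × β)) (y : β) : ℕ := #(E.filter fun p => p.2 = y)

lemma degA_mono {E E' : Finset (β × β)} (h : E ⊆ E') (x : β) : degA E x ≤ degA E' x :=
  card_le_card (filter_subset_filter _ h)

lemma sum_degA {E : Finset (β × β)} {X Y : Finset β} (h : E ⊆ X ×ˢ Y) :
    ∑ x ∈ X, degA E x = E.card :=
  (card_eq_sum_card_fiberwise (fun p hp => (mem_product.1 (h hp)).1)).symm

lemma sum_degB {E : Finset (β × β)} {X Y : Finset β} (h : E ⊆ X ×ˢ Y) :
    ∑ y ∈ Y, degB E y = E.card :=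
  (card_eq_sum_card_fiberwise (fun p hp => (mem_product.1 (h hp)).2)).symm

lemma degA_sdiff {E E' : Finset (β × β)} (h : E ⊆ E') (x : β) :
    degA (E' \ E) x = degA E' x - degA E x := by
  unfold degA
  rw [show (E' \ E).filter (fun p => p.1 = x) =
      E'.filter (fun p => p.1 = x) \ E.filter (fun p => p.1 = x) by
    ext p; simp only [mem_filter, mem_sdiff]; tauto]
  exact card_sdiff_of_subset (filter_subset_filter _ h)

lemma degB_sdiff {E E' : Finset (β × β)} (h : E ⊆ E') (y : β) :
    degB (E' \ E) y = degB E' y - degB E y := by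
  unfold degB
  rw [show (E' \ E).filter (fun p => p.2 = y) =
      E'.filter (fun p => p.2 = y) \ E.filter (fun p => p.2 = y) by
    ext p; simp only [mem_filter, mem_sdiff]; tauto]
  exact card_sdiff_of_subset (filter_subset_filter _ h)

lemma degA_erase_self {E : Finset (β × β)} {p : β × β} (hp : p ∈ E) :
    degA (E.erase p) p.1 = degA E p.1 - 1 := by
  unfold degA
  rw [filter_erase, card_erase_of_mem (by simp [mem_filter, hp])]

lemma degA_erase_ne {E : Finset (β × β)} {p : β × β} {x : β} (hx : p.1 ≠ x) :
    degA (E.erase p) x = degA E x := by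
  unfold degA
  rw [filter_erase, erase_eq_of_notMem (by simp [mem_filter, hx])]

lemma degB_erase_self {E : Finset (β × β)} {p : β × β} (hp : p ∈ E) :
    degB (E.erase p) p.2 = degB E p.2 - 1 := by
  unfold degB
  rw [filter_erase, card_erase_of_mem (by simp [mem_filter, hp])]

lemma degB_erase_ne {E : Finset (β × β)} {p : β × β} {y : β} (hy : p.2 ≠ y) :
    degB (E.erase p) y = degB E y := by
  unfold degB
  rw [filter_erase, erase_eq_of_notMem (by simp [mem_filter, hy])]

lemma degA_insert_self {E : Finset (β × β)} {p : β × β} (hp : p ∉ E) :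
    degA (insert p E) p.1 = degA E p.1 + 1 := by
  unfold degA
  rw [filter_insert, if_pos rfl, card_insert_of_notMem (by simp [mem_filter, hp])]

lemma degA_insert_ne {E : Finset (β × β)} {p : β × β} {x : β} (hx : p.1 ≠ x) :
    degA (insert p E) x = degA E x := by
  unfold degA
  rw [filter_insert, if_neg hx]

lemma degB_insert_self {E : Finset (β × β)} {p : β × β} (hp : p ∉ E) :
    degB (insert p E) p.2 = degB E p.2 + 1 := by
  unfold degB
  rw [filter_insert, if_pos rfl, card_insert_of_notMem (by simp [mem_filter, hp])]

lemma degB_insert_ne {E : Finset (β × β)} {p : β × β} {y : β} (hy : p.2 ≠ y) :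
    degB (insert p E) y = degB E y := by
  unfold degB
  rw [filter_insert, if_neg hy]

lemma one_le_degA {E : Finset (β × β)} {p : β × β} (hp : p ∈ E) : 1 ≤ degA E p.1 :=
  card_pos.2 ⟨p, by simp [mem_filter, hp]⟩

lemma one_le_degB {E : Finset (β × β)} {p : β × β} (hp : p ∈ E) : 1 ≤ degB E p.2 :=
  card_pos.2 ⟨p, by simp [mem_filter, hp]⟩

theorem bip (X Y : Finset β) (E₀ : Finset (β × β)) (c : β → ℕ) (K K' D n : ℕ)
    (hE₀ : E₀ ⊆ X ×ˢ Y) (hXcard : X.card = n)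
    (hK : 1 ≤ K) (hnum : K' * (n - D) < K * (D + 1))
    (hfK : ∀ x ∈ X, c x + K ≤ degA E₀ x) (hfK' : ∀ x ∈ X, degA E₀ x ≤ c x + K')
    (hgK : ∀ y ∈ Y, c y + K ≤ degB E₀ y)
    (hDX : ∀ x ∈ X, D ≤ c x) (hDY : ∀ y ∈ Y, D ≤ c y)
    (hsum : ∑ x ∈ X, c x = ∑ y ∈ Y, c y) :
    ∃ E', E' ⊆ E₀ ∧ (∀ x ∈ X, degA E' x = c x) ∧ (∀ y ∈ Y, degB E' y = c y) := by
  suffices h : ∀ N (E : Finset (β × β)), E.card = N → E ⊆ E₀ →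
      (∀ x ∈ X, c x ≤ degA E x) → (∀ y ∈ Y, c y ≤ degB E y) →
      ∃ E', E' ⊆ E₀ ∧ (∀ x ∈ X, degA E' x = c x) ∧ (∀ y ∈ Y, degB E' y = c y) by
    exact h E₀.card E₀ rfl (Finset.Subset.refl _)
      (fun x hx => le_trans (Nat.le_add_right _ _) (hfK x hx))
      (fun y hy => le_trans (Nat.le_add_right _ _) (hgK y hy))
  intro N
  induction N using Nat.strong_induction_on with
  | _ N ih =>
  intro E hcard hsub hinvA hinvB
  by_cases htight : ∀ x ∈ X, degA E x = c x
  · -- X side tight; deduce Y side tight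
    refine ⟨E, hsub, htight, ?_⟩
    have hsX : ∑ x ∈ X, degA E x = E.card := sum_degA (hsub.trans hE₀)
    have hsY : ∑ y ∈ Y, degB E y = E.card := sum_degB (hsub.trans hE₀)
    have h1 : ∑ y ∈ Y, c y = ∑ y ∈ Y, degB E y := by
      rw [hsY, ← hsX, ← hsum, Finset.sum_congr rfl htight]
    have := (Finset.sum_eq_sum_iff_of_le hinvB).1 h1
    exact fun y hy => ((this y hy)).symm
  · -- there is an excess vertex on the X side
    push_neg at htight
    obtain ⟨x₀, hx₀X, hx₀ne⟩ := htight
    have hx₀ : c x₀ < degA E x₀ := lt_of_le_of_ne (hinvA x₀ hx₀X) (Ne.symm hx₀ne)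
    have hsX : ∑ x ∈ X, degA E x = E.card := sum_degA (hsub.trans hE₀)
    have hsY : ∑ y ∈ Y, degB E y = E.card := sum_degB (hsub.trans hE₀)
    have hstrict : ∑ y ∈ Y, c y < ∑ y ∈ Y, degB E y := by
      rw [hsY, ← hsX, ← hsum]
      exact Finset.sum_lt_sum hinvA ⟨x₀, hx₀X, hx₀⟩
    have hy₀ : ∃ y₀ ∈ Y, c y₀ < degB E y₀ := by
      by_contra hcon
      push_neg at hcon
      exact absurd (Finset.sum_le_sum hcon) (not_le.2 hstrict)
    obtain ⟨y₀, hy₀Y, hy₀lt⟩ := hy₀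
    have hNpos : 1 ≤ N := by
      have h2 : (E.filter fun p => p.1 = x₀).Nonempty :=
        card_pos.1 (lt_of_le_of_lt (Nat.zero_le _) hx₀)
      obtain ⟨p, hp⟩ := h2
      have hpE : p ∈ E := (mem_filter.1 hp).1
      have := card_pos.2 ⟨p, hpE⟩
      omega
    by_cases hA : ∃ p ∈ E, c p.1 < degA E p.1 ∧ c p.2 < degB E p.2
    · -- Case A : delete the edge p
      obtain ⟨p, hpE, hp1, hp2⟩ := hA
      refine ih (N - 1) (by omega) (E.erase p) (by rw [card_erase_of_mem hpE, hcard]) 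
        ((erase_subset _ _).trans hsub) ?_ ?_
      · intro x hx
        by_cases hxp : p.1 = x
        · subst hxp; rw [degA_erase_self hpE]; omega
        · rw [degA_erase_ne hxp]; exact hinvA x hx
      · intro y hy
        by_cases hyp : p.2 = y
        · subst hyp; rw [degB_erase_self hpE]; omega
        · rw [degB_erase_ne hyp]; exact hinvB y hy
    · -- Case B : swap
      push_neg at hA
      -- tight neighbours of x₀ and y₀
      set T : Finset β := (E.filter fun p => p.1 = x₀).image Prod.snd with hT
      set S : Finset β := (E.filter fun p => p.2 = y₀).image Prod.fst with hS
      have hTmem : ∀ y' ∈ T, (x₀, y') ∈ E ∧ y' ∈ Y ∧ degB E y' = c y' := by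
        intro y' hy'
        obtain ⟨p, hp, hps⟩ := mem_image.1 hy'
        obtain ⟨hpE, hp1⟩ := mem_filter.1 hp
        have hpeq : p = (x₀, y') := by
          ext <;> simp [hp1, hps]
        rw [hpeq] at hpE
        have hYmem : y' ∈ Y := (mem_product.1 (hE₀ (hsub hpE))).2
        refine ⟨hpE, hYmem, le_antisymm ?_ (hinvB y' hYmem)⟩
        exact hA (x₀, y') hpE hx₀
      have hSmem : ∀ x' ∈ S, (x', y₀) ∈ E ∧ x' ∈ X ∧ degA E x' = c x' := by
        intro x' hx'
        obtain ⟨p, hp, hps⟩ := mem_image.1 hx'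
        obtain ⟨hpE, hp2⟩ := mem_filter.1 hp
        have hpeq : p = (x', y₀) := by
          ext <;> simp [hp2, hps]
        rw [hpeq] at hpE
        have hXmem : x' ∈ X := (mem_product.1 (hE₀ (hsub hpE))).1
        refine ⟨hpE, hXmem, le_antisymm ?_ (hinvA x' hXmem)⟩
        by_contra hlt
        push_neg at hlt
        have h5 : degB E y₀ ≤ c y₀ := hA (x', y₀) hpE (show c x' < degA E x' by omega)
        omega
      have hTcard : T.card = degA E x₀ := by
        rw [hT]
        refine card_image_of_injOn ?_
        intro p hp q hq hpq
        simp only [coe_filter, Set.mem_setOf_eq] at hp hq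
        ext
        · rw [hp.2, hq.2]
        · exact hpq
      have hScard : S.card = degB E y₀ := by
        rw [hS]
        refine card_image_of_injOn ?_
        intro p hp q hq hpq
        simp only [coe_filter, Set.mem_setOf_eq] at hp hq
        ext
        · exact hpq
        · rw [hp.2, hq.2]
      set Hq : Finset (β × β) := E₀ \ E with hHq
      -- lower bound on H-edges into T
      have count1 : K * (c x₀ + 1) ≤ #(Hq.filter fun p => p.2 ∈ T) := by
        have hfib : #(Hq.filter fun p => p.2 ∈ T) = ∑ y' ∈ T, degB Hq y' := by
          rw [card_eq_sum_card_fiberwise (f := Prod.snd) (s := Hq.filter fun p => p.2 ∈ T) (t := T)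
            (fun p hp => (mem_filter.1 hp).2)]
          refine Finset.sum_congr rfl ?_
          intro y' hy'
          unfold degB
          congr 1
          ext p
          simp only [mem_filter, mem_sdiff]
          constructor
          · rintro ⟨⟨hp, _⟩, h2⟩; exact ⟨hp, h2⟩
          · rintro ⟨hp, h2⟩; exact ⟨⟨hp, h2 ▸ hy'⟩, h2⟩
        rw [hfib]
        calc K * (c x₀ + 1) ≤ K * T.card := by
              rw [hTcard]; exact Nat.mul_le_mul_left _ (by omega)
          _ = ∑ _y' ∈ T, K := by rw [Finset.sum_const, smul_eq_mul, mul_comm]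
          _ ≤ ∑ y' ∈ T, degB Hq y' := by
              refine Finset.sum_le_sum ?_
              intro y' hy'
              obtain ⟨_, hYmem, htight'⟩ := hTmem y' hy'
              rw [hHq, degB_sdiff hsub, htight']
              have := hgK y' hYmem
              omega
      -- upper bound on H-edges avoiding S
      have count2 : #(Hq.filter fun p => p.1 ∉ S) ≤ K' * (n - D) := by
        have hfib : #(Hq.filter fun p => p.1 ∉ S) = ∑ x' ∈ X \ S, 
            #((Hq.filter fun p => p.1 ∉ S).filter fun p => p.1 = x') := by
          refine card_eq_sum_card_fiberwise (f := Prod.fst) ?_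
          intro p hp
          obtain ⟨hpH, hpS⟩ := mem_filter.1 hp
          refine mem_sdiff.2 ⟨(mem_product.1 (hE₀ (mem_sdiff.1 hpH).1)).1, hpS⟩
        rw [hfib]
        have hSsubX : S ⊆ X := fun x' hx' => (hSmem x' hx').2.1
        calc ∑ x' ∈ X \ S, #((Hq.filter fun p => p.1 ∉ S).filter fun p => p.1 = x') 
            ≤ ∑ x' ∈ X \ S, K' := by
              refine Finset.sum_le_sum ?_
              intro x' hx'
              have hx'X : x' ∈ X := (mem_sdiff.1 hx').1
              have h1 : #((Hq.filter fun p => p.1 ∉ S).filter fun p => p.1 = x') ≤ degA Hq x' := by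
                unfold degA
                refine card_le_card ?_
                intro p hp
                exact mem_filter.2 ⟨(mem_filter.1 (mem_filter.1 hp).1).1, (mem_filter.1 hp).2⟩
              have h2 : degA Hq x' ≤ K' := by
                rw [hHq, degA_sdiff hsub]
                have := hfK' x' hx'X
                have := hinvA x' hx'X
                omega
              omega
          _ = K' * (X \ S).card := by rw [Finset.sum_const, smul_eq_mul, mul_comm]
          _ ≤ K' * (n - D) := by
              refine Nat.mul_le_mul_left _ ?_
              rw [card_sdiff_of_subset hSsubX, hXcard]
              have : D ≤ S.card := by
                rw [hScard]
                exact le_trans (hDY y₀ hy₀Y) (hinvB y₀ hy₀Y)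
              omega
      -- find the swap edge
      have hswap : ∃ p ∈ Hq, p.2 ∈ T ∧ p.1 ∈ S := by
        by_contra hcon
        push_neg at hcon
        have hsub' : (Hq.filter fun p => p.2 ∈ T) ⊆ (Hq.filter fun p => p.1 ∉ S) := by
          intro p hp
          obtain ⟨h1, h2⟩ := mem_filter.1 hp
          exact mem_filter.2 ⟨h1, fun hPS => (hcon p h1 h2) hPS⟩
        have := card_le_card hsub'
        have hcx₀D : D ≤ c x₀ := hDX x₀ hx₀X
        have : K * (c x₀ + 1) ≤ K' * (n - D) := le_trans count1 (le_trans this count2)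
        have : K * (D + 1) ≤ K * (c x₀ + 1) := Nat.mul_le_mul_left _ (by omega)
        omega
      obtain ⟨pq, hpqH, hpqT, hpqS⟩ := hswap
      obtain ⟨x', y'⟩ := pq
      simp only at hpqT hpqS
      obtain ⟨hxy'E, hy'Y, hy'tight⟩ := hTmem y' hpqT
      obtain ⟨hx'yE, hx'X, hx'tight⟩ := hSmem x' hpqS
      have hpqE₀ : (x', y') ∈ E₀ := (mem_sdiff.1 hpqH).1
      have hpqnE : (x', y') ∉ E := (mem_sdiff.1 hpqH).2
      have hxne : x' ≠ x₀ := by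
        intro h; rw [h] at hx'tight; omega
      have hyne : y' ≠ y₀ := by
        intro h; rw [h] at hy'tight; omega
      have hne1 : (x₀, y') ≠ (x', y₀) := by
        intro h; exact hxne (congrArg Prod.fst h).symm
      set E₁ : Finset (β × β) := (E.erase (x₀, y')).erase (x', y₀) with hE₁
      have hx'y₀E₁ : (x', y₀) ∈ E.erase (x₀, y') := mem_erase.2 ⟨fun h => hne1 h.symm, hx'yE⟩
      have hE₁card : E₁.card = E.card - 2 := by
        rw [hE₁, card_erase_of_mem hx'y₀E₁, card_erase_of_mem hxy'E]
        omega
      have hpqnE₁ : (x', y') ∉ E₁ := fun h => hpqnE ((erase_subset _ _) ((erase_subset _ _) h))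
      set E₂ : Finset (β × β) := insert (x', y') E₁ with hE₂
      have hE₂card : E₂.card = E.card - 1 := by
        rw [hE₂, card_insert_of_notMem hpqnE₁, hE₁card]
        have h2 : 2 ≤ E.card := by
          have := card_le_card (fun p hp => (mem_erase.1 hp).2 : E.erase (x₀,y') ⊆ E)
          have h1 : 1 ≤ (E.erase (x₀, y')).card := card_pos.2 ⟨_, hx'y₀E₁⟩
          rw [card_erase_of_mem hxy'E] at h1
          omega
        omega
      have hE₂sub : E₂ ⊆ E₀ := by
        rw [hE₂]
        exact insert_subset hpqE₀ (((erase_subset _ _).trans (erase_subset _ _)).trans hsub)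
      refine ih (N - 1) (by omega) E₂ (by rw [hE₂card, hcard]) hE₂sub ?_ ?_
      · intro x hx
        by_cases h1 : x₀ = x
        · subst h1
          rw [hE₂, degA_insert_ne (hxne : (x',y').1 ≠ x₀), hE₁,
            degA_erase_ne (hxne : (x',y₀).1 ≠ x₀), degA_erase_self hxy'E]
          show c x₀ ≤ degA E x₀ - 1
          omega
        · by_cases h2 : x' = x
          · subst h2
            rw [hE₂, degA_insert_self hpqnE₁, hE₁, degA_erase_self hx'y₀E₁,
              degA_erase_ne (h1 : (x₀,y').1 ≠ x')]
            have h3 : 1 ≤ degA E x' := card_pos.2 ⟨(x', y₀), mem_filter.2 ⟨hx'yE, rfl⟩⟩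
            have := hinvA x' hx
            show c x' ≤ degA E x' - 1 + 1
            omega
          · rw [hE₂, degA_insert_ne (h2 : (x',y').1 ≠ x), hE₁,
              degA_erase_ne (h2 : (x',y₀).1 ≠ x),
              degA_erase_ne (h1 : (x₀,y').1 ≠ x)]
            exact hinvA x hx
      · intro y hy
        by_cases h1 : y₀ = y
        · subst h1
          rw [hE₂, degB_insert_ne (hyne : (x',y').2 ≠ y₀), hE₁, degB_erase_self hx'y₀E₁,
            degB_erase_ne (hyne : (x₀,y').2 ≠ y₀)]
          show c y₀ ≤ degB E y₀ - 1
          omega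
        · by_cases h2 : y' = y
          · subst h2
            rw [hE₂, degB_insert_self hpqnE₁, hE₁,
              degB_erase_ne (h1 : (x',y₀).2 ≠ y'), degB_erase_self hxy'E]
            have h3 : 1 ≤ degB E y' := card_pos.2 ⟨(x₀, y'), mem_filter.2 ⟨hxy'E, rfl⟩⟩
            have := hinvB y' hy
            show c y' ≤ degB E y' - 1 + 1
            omega
          · rw [hE₂, degB_insert_ne (h2 : (x',y').2 ≠ y), hE₁,
              degB_erase_ne (h1 : (x',y₀).2 ≠ y),
              degB_erase_ne (h2 : (x₀,y').2 ≠ y)]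
            exact hinvB y hy



lemma distribute (B : ℕ) :
    ∀ (W : Finset β) (N : ℕ), N ≤ B * W.card →
    ∃ t : β → ℕ, (∑ v ∈ W, t v = N) ∧ ∀ v ∈ W, t v ≤ B := by
  intro W
  induction W using Finset.induction_on with
  | empty =>
    intro N hN
    simp only [card_empty, Nat.mul_zero, Nat.le_zero] at hN
    exact ⟨fun _ => 0, by simp [hN], by simp⟩
  | @insert a s ha ih =>
    intro N hN
    rw [card_insert_of_notMem ha] at hN
    have hmul : B * (s.card + 1) = B * s.card + B := by ring
    obtain ⟨t, ht1, ht2⟩ := ih (N - min B N) (by omega)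
    refine ⟨fun v => if v = a then min B N else t v, ?_, ?_⟩
    · rw [Finset.sum_insert ha]
      have e1 : (if a = a then min B N else t a) = min B N := if_pos rfl
      have e2 : ∑ v ∈ s, (if v = a then min B N else t v) = ∑ v ∈ s, t v :=
        Finset.sum_congr rfl (fun v hv => if_neg (fun h => ha (by rw [← h]; exact hv)))
      show (if a = a then min B N else t a) + ∑ v ∈ s, (if v = a then min B N else t v) = N
      rw [e1, e2, ht1]
      omega
    · intro v hv
      show (if v = a then min B N else t v) ≤ B
      rcases mem_insert.1 hv with h | h
      · rw [if_pos h]; exact min_le_left _ _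
      · rw [if_neg (fun hva => ha (by rw [← hva]; exact h))]
        exact ht2 v h


lemma degA_eq_card_filter {E : Finset (β × β)} {X Y : Finset β} (hE : E ⊆ X ×ˢ Y) (x : β) :
    #(E.filter fun p => p.1 = x) = #(Y.filter fun w => (x, w) ∈ E) := by
  refine Finset.card_bij (fun p _ => p.2) ?_ ?_ ?_
  · intro p hp
    obtain ⟨hpE, hp1⟩ := mem_filter.1 hp
    refine mem_filter.2 ⟨(mem_product.1 (hE hpE)).2, ?_⟩
    have : (x, p.2) = p := by ext <;> simp [hp1.symm]
    rw [this]; exact hpE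
  · intro p hp q hq hpq
    obtain ⟨_, hp1⟩ := mem_filter.1 hp
    obtain ⟨_, hq1⟩ := mem_filter.1 hq
    ext
    · rw [hp1, hq1]
    · exact hpq
  · intro w hw
    obtain ⟨hwY, hwE⟩ := mem_filter.1 hw
    exact ⟨(x, w), mem_filter.2 ⟨hwE, rfl⟩, rfl⟩

lemma degB_eq_card_filter {E : Finset (β × β)} {X Y : Finset β} (hE : E ⊆ X ×ˢ Y) (y : β) :
    #(E.filter fun p => p.2 = y) = #(X.filter fun w => (w, y) ∈ E) := by
  refine Finset.card_bij (fun p _ => p.1) ?_ ?_ ?_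
  · intro p hp
    obtain ⟨hpE, hp2⟩ := mem_filter.1 hp
    refine mem_filter.2 ⟨(mem_product.1 (hE hpE)).1, ?_⟩
    have : (p.1, y) = p := by ext <;> simp [hp2.symm]
    rw [this]; exact hpE
  · intro p hp q hq hpq
    obtain ⟨_, hp2⟩ := mem_filter.1 hp
    obtain ⟨_, hq2⟩ := mem_filter.1 hq
    ext
    · exact hpq
    · rw [hp2, hq2]
  · intro w hw
    obtain ⟨hwX, hwE⟩ := mem_filter.1 hw
    exact ⟨(w, y), mem_filter.2 ⟨hwE, rfl⟩, rfl⟩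


section ASM
variable {β : Type*} [Fintype β] [DecidableEq β]

theorem assemble {r : ℕ} (hr : 3 ≤ r)
    (V : Fin r → Finset β) (G : SimpleGraph β) [DecidableRel G.Adj]
    (n A T Dc : ℕ)
    (hdisj : ∀ j₁ j₂ : Fin r, j₁ ≠ j₂ → Disjoint (V j₁) (V j₂))
    (hcover : ∀ x : β, ∃ j, x ∈ V j)
    (hcard : ∀ j, (V j).card = n)
    (hpart : ∀ x y : β, G.Adj x y → ∃ j₁ j₂ : Fin r, j₁ ≠ j₂ ∧ x ∈ V j₁ ∧ y ∈ V j₂)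
    (hdeg : ∀ (j : Fin r) (v : β), v ∉ V j → Dc ≤ #((V j).filter (G.Adj v)))
    (hdiff : ∀ (j₁ j₂ : Fin r) (v : β), v ∉ V j₁ → v ∉ V j₂ →
        #((V j₁).filter (G.Adj v)) ≤ #((V j₂).filter (G.Adj v)) + A)
    (hT : 1 ≤ T)
    (hK'Dc : 4 * (T + 4 * A) ≤ Dc)
    (hnum : (T + 4 * A) * (n - (Dc - (T + 4 * A))) < T * ((Dc - (T + 4 * A)) + 1)) :
    ∃ H : SimpleGraph β, H ≤ G ∧
      (∀ v : β, (H.neighborSet v).ncard ≤ (r - 1) * (T + 4 * A)) ∧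
      (∀ j₁ j₂ : Fin r, ∀ v : β, v ∉ V j₁ → v ∉ V j₂ →
        ((V j₁ : Set β) ∩ (G \ H).neighborSet v).ncard =
          ((V j₂ : Set β) ∩ (G \ H).neighborSet v).ncard) := by
  classical
  -- the class of each vertex
  choose cl hclmem using hcover
  have hcluniq : ∀ {x : β} {j : Fin r}, x ∈ V j → cl x = j := by
    intro x j hx
    by_contra hne
    exact (Finset.disjoint_left.1 (hdisj (cl x) j hne)) (hclmem x) hx
  have hnotmem : ∀ {v : β} {j : Fin r}, cl v ≠ j → v ∉ V j :=
    fun h hv => h (hcluniq hv)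
  -- degrees
  set d : β → Fin r → ℕ := fun v j => #((V j).filter (G.Adj v)) with hd
  have hd_le : ∀ v j, d v j ≤ n := fun v j => (hcard j) ▸ card_le_card (filter_subset _ _)
  have hdeg' : ∀ v (j : Fin r), cl v ≠ j → Dc ≤ d v j := fun v j h => hdeg j v (hnotmem h)
  have hdiff' : ∀ v (j₁ j₂ : Fin r), cl v ≠ j₁ → cl v ≠ j₂ → d v j₁ ≤ d v j₂ + A :=
    fun v j₁ j₂ h1 h2 => hdiff j₁ j₂ v (hnotmem h1) (hnotmem h2)
  -- no edges inside a class
  have hintra : ∀ v w, G.Adj v w → cl w ≠ cl v := by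
    intro v w hadj heq
    obtain ⟨j₁, j₂, hne, hv, hw⟩ := hpart v w hadj
    exact hne (by rw [← hcluniq hv, ← hcluniq hw, heq])
  -- minimum cross degree of a vertex
  have hne_erase : ∀ i : Fin r, ((univ : Finset (Fin r)).erase i).Nonempty := by
    intro i
    rw [← card_pos, card_erase_of_mem (mem_univ i), card_univ, Fintype.card_fin]
    omega
  set m : β → ℕ := fun v => ((univ.erase (cl v)).inf' (hne_erase (cl v)) (d v)) with hm
  have hm_le : ∀ v (j : Fin r), cl v ≠ j → m v ≤ d v j :=
    fun v j h => inf'_le _ (mem_erase.2 ⟨Ne.symm h, mem_univ _⟩)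
  have hm_attain : ∀ v, ∃ j, cl v ≠ j ∧ m v = d v j := by
    intro v
    obtain ⟨j, hj, hjeq⟩ := exists_mem_eq_inf' (hne_erase (cl v)) (d v)
    exact ⟨j, Ne.symm (mem_erase.1 hj).1, hjeq⟩
  have hm_ub : ∀ v (j : Fin r), cl v ≠ j → d v j ≤ m v + A := by
    intro v j h
    obtain ⟨k, hk, hkeq⟩ := hm_attain v
    rw [hkeq]
    exact hdiff' v j k h hk
  have hDc_m : ∀ v, Dc ≤ m v := by
    intro v
    obtain ⟨k, hk, hkeq⟩ := hm_attain v
    rw [hkeq]; exact hdeg' v k hk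
  have hm_n : ∀ v, m v ≤ n := by
    intro v
    obtain ⟨k, hk, hkeq⟩ := hm_attain v
    rw [hkeq]; exact hd_le v k
  -- class sums of m
  set S : Fin r → ℕ := fun i => ∑ v ∈ V i, m v with hS
  have hclV : ∀ (i : Fin r) v, v ∈ V i → cl v = i := fun i v hv => hcluniq hv
  have hSd : ∀ (i j : Fin r), i ≠ j → S i ≤ ∑ v ∈ V i, d v j := by
    intro i j hij
    refine Finset.sum_le_sum ?_
    intro v hv
    exact hm_le v j (by rw [hclV i v hv]; exact hij)
  have hdS : ∀ (i j : Fin r), i ≠ j → ∑ v ∈ V i, d v j ≤ S i + A * n := by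
    intro i j hij
    calc ∑ v ∈ V i, d v j ≤ ∑ v ∈ V i, (m v + A) := by
          refine Finset.sum_le_sum ?_
          intro v hv
          exact hm_ub v j (by rw [hclV i v hv]; exact hij)
      _ = S i + A * n := by
          rw [Finset.sum_add_distrib, Finset.sum_const, hcard, smul_eq_mul, mul_comm]
  have hjk : ∀ (i j k : Fin r), i ≠ j → i ≠ k → ∑ v ∈ V i, d v j ≤ (∑ v ∈ V i, d v k) + A * n := by
    intro i j k hij hik
    calc ∑ v ∈ V i, d v j ≤ ∑ v ∈ V i, (d v k + A) := by
          refine Finset.sum_le_sum ?_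
          intro v hv
          exact hdiff' v j k (by rw [hclV i v hv]; exact hij) (by rw [hclV i v hv]; exact hik)
      _ = (∑ v ∈ V i, d v k) + A * n := by
          rw [Finset.sum_add_distrib, Finset.sum_const, hcard, smul_eq_mul, mul_comm]
  -- the bipartite edge sets
  set E0 : Fin r → Fin r → Finset (β × β) :=
    fun i j => (V i ×ˢ V j).filter (fun p => G.Adj p.1 p.2) with hE0
  have hE0sub : ∀ i j, E0 i j ⊆ V i ×ˢ V j := fun i j => filter_subset _ _
  have hE0mem : ∀ (i j : Fin r) (p : β × β),
      p ∈ E0 i j ↔ p.1 ∈ V i ∧ p.2 ∈ V j ∧ G.Adj p.1 p.2 := by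
    intro i j p
    rw [hE0]
    simp only [mem_filter, mem_product]
    tauto
  have hdegA_E0 : ∀ (i j : Fin r), i ≠ j → ∀ v ∈ V i, degA (E0 i j) v = d v j := by
    intro i j hij v hv
    have h1 : degA (E0 i j) v = #((V j).filter fun w => (v, w) ∈ E0 i j) :=
      degA_eq_card_filter (hE0sub i j) v
    rw [h1]
    congr 1
    refine filter_congr ?_
    intro w hw
    simp only [hE0mem i j (v, w)]
    constructor
    · rintro ⟨-, -, h⟩; exact h
    · intro h; exact ⟨hv, hw, h⟩
  have hdegB_E0 : ∀ (i j : Fin r), i ≠ j → ∀ w ∈ V j, degB (E0 i j) w = d w i := by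
    intro i j hij w hw
    have h1 : degB (E0 i j) w = #((V i).filter fun u => (u, w) ∈ E0 i j) :=
      degB_eq_card_filter (hE0sub i j) w
    rw [h1]
    congr 1
    refine filter_congr ?_
    intro u hu
    simp only [hE0mem i j (u, w)]
    constructor
    · rintro ⟨-, -, h⟩; exact (G.adj_comm u w).1 h
    · intro h; exact ⟨hu, hw, (G.adj_comm w u).1 h⟩
  have he_eq : ∀ (i j : Fin r), i ≠ j → ∑ v ∈ V i, d v j = ∑ w ∈ V j, d w i := by
    intro i j hij
    have h1 : ∑ v ∈ V i, degA (E0 i j) v = (E0 i j).card := sum_degA (hE0sub i j)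
    have h2 : ∑ w ∈ V j, degB (E0 i j) w = (E0 i j).card := sum_degB (hE0sub i j)
    calc ∑ v ∈ V i, d v j = ∑ v ∈ V i, degA (E0 i j) v :=
          Finset.sum_congr rfl (fun v hv => (hdegA_E0 i j hij v hv).symm)
      _ = (E0 i j).card := h1
      _ = ∑ w ∈ V j, degB (E0 i j) w := h2.symm
      _ = ∑ w ∈ V j, d w i := Finset.sum_congr rfl (fun w hw => hdegB_E0 i j hij w hw)
  -- the chain bound between class sums of m
  have hthird : ∀ i j : Fin r, ∃ k, k ≠ i ∧ k ≠ j := by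
    intro i j
    have hcard2 : #({i, j} : Finset (Fin r)) ≤ 2 :=
      le_trans (card_insert_le _ _) (by rw [card_singleton])
    have : (univ \ ({i, j} : Finset (Fin r))).Nonempty := by
      rw [← card_pos, card_sdiff_of_subset (subset_univ _), card_univ, Fintype.card_fin]
      omega
    obtain ⟨k, hk⟩ := this
    rw [mem_sdiff, mem_insert, mem_singleton] at hk
    exact ⟨k, fun h => hk.2 (Or.inl h), fun h => hk.2 (Or.inr h)⟩
  have hchain : ∀ i j : Fin r, S i ≤ S j + 3 * (A * n) := by
    intro i j
    by_cases hij : i = j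
    · rw [hij]; omega
    obtain ⟨k, hki, hkj⟩ := hthird i j
    have c1 : S i ≤ ∑ v ∈ V i, d v k := hSd i k (Ne.symm hki)
    have c2 : ∑ v ∈ V i, d v k ≤ (∑ v ∈ V i, d v j) + A * n := hjk i k j (Ne.symm hki) hij
    have c3 : ∑ v ∈ V i, d v j = ∑ w ∈ V j, d w i := he_eq i j hij
    have c4 : ∑ w ∈ V j, d w i ≤ (∑ w ∈ V j, d w k) + A * n :=
      hjk j i k (fun h => hij h.symm) (Ne.symm hkj)
    have c5 : ∑ w ∈ V j, d w k ≤ S j + A * n := hdS j k (Ne.symm hkj)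
    omega
  -- the global minimum
  have huniv_ne : (univ : Finset (Fin r)).Nonempty := ⟨⟨0, by omega⟩, mem_univ _⟩
  set M : ℕ := univ.inf' huniv_ne S with hM
  have hM_le : ∀ i, M ≤ S i := fun i => inf'_le _ (mem_univ i)
  have hSM : ∀ i, S i ≤ M + 3 * (A * n) := by
    obtain ⟨i₀, -, h0⟩ := exists_mem_eq_inf' huniv_ne S
    intro i
    have := hchain i i₀
    omega
  -- distribute the adjustment
  have hdist : ∀ i : Fin r, ∃ t : β → ℕ, (∑ v ∈ V i, t v = S i - M) ∧ ∀ v ∈ V i, t v ≤ 3 * A := by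
    intro i
    refine distribute (3 * A) (V i) (S i - M) ?_
    rw [hcard]
    have := hSM i
    have := hM_le i
    have h3 : 3 * A * n = 3 * (A * n) := by ring
    omega
  choose tf htf1 htf2 using hdist
  set t : β → ℕ := fun v => tf (cl v) v with ht
  have ht_le : ∀ v, t v ≤ 3 * A := fun v => htf2 (cl v) v (hclmem v)
  -- the target degree c
  set c : β → ℕ := fun v => m v - (T + t v) with hc
  have hTt_le : ∀ v, T + t v ≤ m v := by
    intro v
    have := ht_le v
    have := hDc_m v
    omega
  have hc_add : ∀ v, c v + (T + t v) = m v := by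
    intro v
    have := hTt_le v
    show m v - (T + t v) + (T + t v) = m v
    omega
  have hc_lb : ∀ v (j : Fin r), cl v ≠ j → c v + T ≤ d v j := by
    intro v j h
    have := hc_add v
    have := hm_le v j h
    omega
  have hc_ub : ∀ v (j : Fin r), cl v ≠ j → d v j ≤ c v + (T + 4 * A) := by
    intro v j h
    have := hc_add v
    have := hm_ub v j h
    have := ht_le v
    omega
  have hc_D : ∀ v, Dc - (T + 4 * A) ≤ c v := by
    intro v
    have := hc_add v
    have := hDc_m v
    have := ht_le v
    omega
  have hM_lb : T * n ≤ M := by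
    obtain ⟨i₀, -, h0⟩ := exists_mem_eq_inf' huniv_ne S
    have h1 : Dc * n ≤ S i₀ := by
      rw [hS]
      calc Dc * n = ∑ _v ∈ V i₀, Dc := by rw [Finset.sum_const, hcard, smul_eq_mul, mul_comm]
        _ ≤ ∑ v ∈ V i₀, m v := Finset.sum_le_sum (fun v _ => hDc_m v)
    have h2 : T ≤ Dc := by omega
    have h3 : T * n ≤ Dc * n := Nat.mul_le_mul_right _ h2
    rw [hM, h0]
    omega
  have hc_sum : ∀ i : Fin r, ∑ v ∈ V i, c v = M - T * n := by
    intro i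
    have h1 : ∑ v ∈ V i, (c v + (T + t v)) = S i :=
      Finset.sum_congr rfl (fun v _ => hc_add v)
    have h2 : ∑ v ∈ V i, (c v + (T + t v)) =
        (∑ v ∈ V i, c v) + (T * n + ∑ v ∈ V i, t v) := by
      rw [Finset.sum_add_distrib, Finset.sum_add_distrib, Finset.sum_const, hcard,
        smul_eq_mul, mul_comm]
    have h3 : ∑ v ∈ V i, t v = S i - M := by
      rw [← htf1 i]
      refine Finset.sum_congr rfl ?_
      intro v hv
      rw [ht]
      simp only
      rw [hclV i v hv]
    have h4 := hM_le i
    omega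
  -- apply the bipartite lemma to every ordered pair of classes
  have hbip : ∀ i j : Fin r, ∃ E', E' ⊆ E0 i j ∧ (i < j →
      (∀ x ∈ V i, degA E' x = c x) ∧ (∀ y ∈ V j, degB E' y = c y)) := by
    intro i j
    by_cases hij : i < j
    · have hne : i ≠ j := ne_of_lt hij
      obtain ⟨E', h1, h2, h3⟩ :=
        bip (V i) (V j) (E0 i j) c T (T + 4 * A) (Dc - (T + 4 * A)) n (hE0sub i j) (hcard i)
          hT hnum
          (fun x hx => by
            rw [hdegA_E0 i j hne x hx]
            exact hc_lb x j (by rw [hclV i x hx]; exact hne))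
          (fun x hx => by
            rw [hdegA_E0 i j hne x hx]
            exact hc_ub x j (by rw [hclV i x hx]; exact hne))
          (fun y hy => by
            rw [hdegB_E0 i j hne y hy]
            exact hc_lb y i (by rw [hclV j y hy]; exact (Ne.symm hne)))
          (fun x _ => hc_D x) (fun y _ => hc_D y)
          (by rw [hc_sum i, hc_sum j])
      exact ⟨E', h1, fun _ => ⟨h2, h3⟩⟩
    · exact ⟨∅, empty_subset _, fun h => absurd h hij⟩
  choose EE hEEsub hEEprop using hbip
  have hEEsub' : ∀ i j : Fin r, EE i j ⊆ V i ×ˢ V j :=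
    fun i j => (hEEsub i j).trans (hE0sub i j)
  -- the deleted edges
  set F : Finset (β × β) :=
    univ.biUnion (fun q : Fin r × Fin r =>
      if q.1 < q.2 then E0 q.1 q.2 \ EE q.1 q.2 else ∅) with hF
  have hFmem : ∀ p : β × β, p ∈ F ↔ ∃ i j : Fin r, i < j ∧ p ∈ E0 i j \ EE i j := by
    intro p
    rw [hF, mem_biUnion]
    constructor
    · rintro ⟨q, -, hq⟩
      by_cases h : q.1 < q.2
      · rw [if_pos h] at hq
        exact ⟨q.1, q.2, h, hq⟩
      · rw [if_neg h] at hq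
        exact absurd hq (notMem_empty p)
    · rintro ⟨i, j, hij, hp⟩
      exact ⟨(i, j), mem_univ _, by rw [if_pos hij]; exact hp⟩
  have hFadj : ∀ p : β × β, p ∈ F → G.Adj p.1 p.2 := by
    intro p hp
    obtain ⟨i, j, hij, hp⟩ := (hFmem p).1 hp
    exact ((hE0mem i j p).1 (mem_sdiff.1 hp).1).2.2
  have hFij : ∀ v w : β, (v, w) ∈ F →
      cl v < cl w ∧ (v, w) ∈ E0 (cl v) (cl w) \ EE (cl v) (cl w) := by
    intro v w hvw
    obtain ⟨i, j, hij, hp⟩ := (hFmem (v, w)).1 hvw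
    obtain ⟨h1, h2, -⟩ := (hE0mem i j (v, w)).1 (mem_sdiff.1 hp).1
    rw [hcluniq h1, hcluniq h2]
    exact ⟨hij, hp⟩
  have hFij' : ∀ v w : β, cl v < cl w →
      (v, w) ∈ E0 (cl v) (cl w) \ EE (cl v) (cl w) → (v, w) ∈ F := by
    intro v w hlt hm
    exact (hFmem (v, w)).2 ⟨cl v, cl w, hlt, hm⟩
  -- the graph H of deleted edges
  set H : SimpleGraph β :=
    { Adj := fun a b => (a, b) ∈ F ∨ (b, a) ∈ F
      symm := ⟨fun a b h => Or.symm h⟩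
      loopless := ⟨fun a h => by
        rcases h with h | h <;> exact G.loopless.irrefl a (hFadj _ h)⟩ } with hH
  have hHadj : ∀ v w : β, H.Adj v w ↔ ((v, w) ∈ F ∨ (w, v) ∈ F) := fun v w => Iff.rfl
  have hHG : H ≤ G := by
    intro a b hab
    rcases (hHadj a b).1 hab with h | h
    · exact hFadj (a, b) h
    · exact (hFadj (b, a) h).symm
  -- remaining cross degrees are exactly c
  have hrem : ∀ (v : β) (j : Fin r), cl v ≠ j →
      #((V j).filter fun w => (G \ H).Adj v w) = c v := by
    intro v j hne
    rcases lt_or_gt_of_ne hne with hij | hij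
    · -- cl v < j : use the A-side of the pair (cl v, j)
      have hstep : (V j).filter (fun w => (G \ H).Adj v w) =
          (V j).filter (fun w => (v, w) ∈ EE (cl v) j) := by
        refine filter_congr ?_
        intro w hw
        rw [SimpleGraph.sdiff_adj]
        constructor
        · rintro ⟨hGvw, hnH⟩
          have hE0m : (v, w) ∈ E0 (cl v) j := (hE0mem _ _ _).2 ⟨hclmem v, hw, hGvw⟩
          by_contra hEEm
          have : (v, w) ∈ F := by
            refine hFij' v w ?_ ?_
            · rw [hcluniq hw]; exact hij
            · rw [hcluniq hw]; exact mem_sdiff.2 ⟨hE0m, hEEm⟩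
          exact hnH ((hHadj v w).2 (Or.inl this))
        · intro hEEm
          have hE0m : (v, w) ∈ E0 (cl v) j := hEEsub _ _ hEEm
          refine ⟨((hE0mem _ _ _).1 hE0m).2.2, ?_⟩
          intro hHvw
          rcases (hHadj v w).1 hHvw with h | h
          · have := (hFij v w h).2
            rw [hcluniq hw] at this
            exact (mem_sdiff.1 this).2 hEEm
          · have := (hFij w v h).1
            rw [hcluniq hw] at this
            omega
      rw [hstep, ← degA_eq_card_filter (hEEsub' (cl v) j) v]
      exact (hEEprop (cl v) j hij).1 v (hclmem v)
    · -- j < cl v : use the B-side of the pair (j, cl v)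
      have hstep : (V j).filter (fun w => (G \ H).Adj v w) =
          (V j).filter (fun w => (w, v) ∈ EE j (cl v)) := by
        refine filter_congr ?_
        intro w hw
        rw [SimpleGraph.sdiff_adj]
        constructor
        · rintro ⟨hGvw, hnH⟩
          have hE0m : (w, v) ∈ E0 j (cl v) := (hE0mem _ _ _).2 ⟨hw, hclmem v, hGvw.symm⟩
          by_contra hEEm
          have : (w, v) ∈ F := by
            have h1 : cl w < cl v := by rw [hcluniq hw]; exact hij
            have h2 : (w, v) ∈ E0 (cl w) (cl v) \ EE (cl w) (cl v) := by
              rw [hcluniq hw]; exact mem_sdiff.2 ⟨hE0m, hEEm⟩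
            exact hFij' w v h1 h2
          exact hnH ((hHadj v w).2 (Or.inr this))
        · intro hEEm
          have hE0m : (w, v) ∈ E0 j (cl v) := hEEsub _ _ hEEm
          refine ⟨(((hE0mem _ _ _).1 hE0m).2.2).symm, ?_⟩
          intro hHvw
          rcases (hHadj v w).1 hHvw with h | h
          · have := (hFij v w h).1
            rw [hcluniq hw] at this
            omega
          · have := (hFij w v h).2
            rw [hcluniq hw] at this
            exact (mem_sdiff.1 this).2 hEEm
      rw [hstep, ← degB_eq_card_filter (hEEsub' j (cl v)) v]
      exact (hEEprop j (cl v) hij).2 v (hclmem v)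
  -- deleted cross degrees are at most T + 4A
  have hdel : ∀ (v : β) (j : Fin r), cl v ≠ j →
      #((V j).filter fun w => H.Adj v w) ≤ T + 4 * A := by
    intro v j hne
    rcases lt_or_gt_of_ne hne with hij | hij
    · have hstep : (V j).filter (fun w => H.Adj v w) =
          (V j).filter (fun w => (v, w) ∈ E0 (cl v) j \ EE (cl v) j) := by
        refine filter_congr ?_
        intro w hw
        constructor
        · intro hHvw
          rcases (hHadj v w).1 hHvw with h | h
          · have := (hFij v w h).2
            rw [hcluniq hw] at this
            exact this
          · have := (hFij w v h).1
            rw [hcluniq hw] at this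
            omega
        · intro hm
          refine (hHadj v w).2 (Or.inl (hFij' v w ?_ ?_))
          · rw [hcluniq hw]; exact hij
          · rw [hcluniq hw]; exact hm
      rw [hstep, ← degA_eq_card_filter ((sdiff_subset).trans (hE0sub (cl v) j)) v]
      show degA (E0 (cl v) j \ EE (cl v) j) v ≤ T + 4 * A
      rw [degA_sdiff (hEEsub (cl v) j), hdegA_E0 (cl v) j (ne_of_lt hij) v (hclmem v),
        (hEEprop (cl v) j hij).1 v (hclmem v)]
      have := hc_ub v j hne
      omega
    · have hstep : (V j).filter (fun w => H.Adj v w) =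
          (V j).filter (fun w => (w, v) ∈ E0 j (cl v) \ EE j (cl v)) := by
        refine filter_congr ?_
        intro w hw
        constructor
        · intro hHvw
          rcases (hHadj v w).1 hHvw with h | h
          · have := (hFij v w h).1
            rw [hcluniq hw] at this
            omega
          · have := (hFij w v h).2
            rw [hcluniq hw] at this
            exact this
        · intro hm
          refine (hHadj v w).2 (Or.inr ?_)
          have h1 : cl w < cl v := by rw [hcluniq hw]; exact hij
          have h2 : (w, v) ∈ E0 (cl w) (cl v) \ EE (cl w) (cl v) := by
            rw [hcluniq hw]; exact hm
          exact hFij' w v h1 h2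
      rw [hstep, ← degB_eq_card_filter ((sdiff_subset).trans (hE0sub j (cl v))) v]
      show degB (E0 j (cl v) \ EE j (cl v)) v ≤ T + 4 * A
      rw [degB_sdiff (hEEsub j (cl v)), hdegB_E0 j (cl v) (ne_of_lt hij) v (hclmem v),
        (hEEprop j (cl v) hij).2 v (hclmem v)]
      have := hc_ub v j hne
      omega
  -- the degree bound for H
  have hH_nb : ∀ v : β, H.neighborSet v = ↑(univ.filter fun w => H.Adj v w) := by
    intro v
    ext w
    simp only [SimpleGraph.mem_neighborSet, coe_filter, mem_univ, true_and, Set.mem_setOf_eq]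
  have hdegH : ∀ v : β, #(univ.filter fun w => H.Adj v w) ≤ (r - 1) * (T + 4 * A) := by
    intro v
    have hfib : #(univ.filter fun w => H.Adj v w) =
        ∑ j ∈ univ, #((univ.filter fun w => H.Adj v w).filter fun w => cl w = j) :=
      card_eq_sum_card_fiberwise (fun w _ => mem_univ (cl w))
    rw [hfib, ← Finset.sum_erase_add _ _ (mem_univ (cl v))]
    have hz : #((univ.filter fun w => H.Adj v w).filter fun w => cl w = cl v) = 0 := by
      rw [card_eq_zero]
      rw [eq_empty_iff_forall_notMem]
      intro w hw
      obtain ⟨hw1, hw2⟩ := mem_filter.1 hw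
      exact hintra v w (hHG ((mem_filter.1 hw1).2)) hw2
    rw [hz, add_zero]
    calc ∑ j ∈ univ.erase (cl v), #((univ.filter fun w => H.Adj v w).filter fun w => cl w = j)
        ≤ ∑ j ∈ univ.erase (cl v), (T + 4 * A) := by
          refine Finset.sum_le_sum ?_
          intro j hj
          have hne : cl v ≠ j := Ne.symm (mem_erase.1 hj).1
          refine le_trans (card_le_card ?_) (hdel v j hne)
          intro w hw
          obtain ⟨hw1, hw2⟩ := mem_filter.1 hw
          exact mem_filter.2 ⟨by rw [← hw2]; exact hclmem w, (mem_filter.1 hw1).2⟩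
      _ = (r - 1) * (T + 4 * A) := by
          rw [Finset.sum_const, smul_eq_mul, card_erase_of_mem (mem_univ _), card_univ,
            Fintype.card_fin]
  -- conclusion
  refine ⟨H, hHG, ?_, ?_⟩
  · intro v
    rw [hH_nb v, Set.ncard_coe_finset]
    exact hdegH v
  · intro j₁ j₂ v hv1 hv2
    have h1 : cl v ≠ j₁ := fun h => hv1 (h ▸ hclmem v)
    have h2 : cl v ≠ j₂ := fun h => hv2 (h ▸ hclmem v)
    have e1 : ∀ j : Fin r, ((V j : Set β) ∩ (G \ H).neighborSet v) =
        ↑((V j).filter fun w => (G \ H).Adj v w) := by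
      intro j
      ext w
      simp only [Set.mem_inter_iff, SimpleGraph.mem_neighborSet, coe_filter,
        Set.mem_setOf_eq, mem_coe]
    rw [e1 j₁, e1 j₂, Set.ncard_coe_finset, Set.ncard_coe_finset, hrem v j₁ h1, hrem v j₂ h2]

end ASM
end Stmt6Aux

open Finset Stmt6Aux in
/-- Let `1/n ≪ α ≪ γ ≪ 1/r`.  If `G` is an `r`-partite graph on `(V 1, ..., V r)` with all
classes of size `n`, every vertex `v ∉ V j` satisfies `d(v, V j) ≥ (1/2 + 2γ/r)n`, and
`|d(v, V j₁) - d(v, V j₂)| < αn` for all `j₁, j₂` and `v ∉ V j₁ ∪ V j₂`, then there is a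
subgraph `H ⊆ G` with `Δ(H) ≤ γn` such that `G - H` is `K_r`-divisible. -/
theorem stmt6 :
    ∀ r : ℕ, 1 ≤ r →
    ∃ γ₀ : ℝ, 0 < γ₀ ∧ ∀ γ : ℝ, 0 < γ → γ ≤ γ₀ →
    ∃ α₀ : ℝ, 0 < α₀ ∧ ∀ α : ℝ, 0 < α → α ≤ α₀ →
    ∃ n₀ : ℕ, ∀ n : ℕ, n₀ ≤ n →
    ∀ (β : Type) [Fintype β] [DecidableEq β],
    ∀ (V : Fin r → Finset β) (G : SimpleGraph β),
      (∀ j₁ j₂ : Fin r, j₁ ≠ j₂ → Disjoint (V j₁) (V j₂)) →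
      (∀ x : β, ∃ j, x ∈ V j) →
      (∀ j, (V j).card = n) →
      (∀ x y : β, G.Adj x y → ∃ j₁ j₂ : Fin r, j₁ ≠ j₂ ∧ x ∈ V j₁ ∧ y ∈ V j₂) →
      (∀ (j : Fin r) (v : β), v ∉ V j →
        ((1 : ℝ)/2 + 2*γ/r) * n ≤ (((V j : Set β) ∩ G.neighborSet v).ncard : ℝ)) →
      (∀ j₁ j₂ : Fin r, ∀ v : β, v ∉ V j₁ → v ∉ V j₂ →
        |(((V j₁ : Set β) ∩ G.neighborSet v).ncard : ℝ) -
          (((V j₂ : Set β) ∩ G.neighborSet v).ncard : ℝ)| < α * n) →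
      ∃ H : SimpleGraph β, H ≤ G ∧
        (∀ v : β, ((H.neighborSet v).ncard : ℝ) ≤ γ * n) ∧
        (∀ j₁ j₂ : Fin r, ∀ v : β, v ∉ V j₁ → v ∉ V j₂ →
          ((V j₁ : Set β) ∩ (G \ H).neighborSet v).ncard =
            ((V j₂ : Set β) ∩ (G \ H).neighborSet v).ncard) := by
  intro r hr
  refine ⟨1/8, by norm_num, ?_⟩
  intro γ hγ hγ8
  refine ⟨γ^2 / (128 * (r:ℝ)^2), by positivity, ?_⟩
  intro α hα hαle
  refine ⟨⌈(200:ℝ) / (2*γ/(r:ℝ))^2⌉₊ + 1, ?_⟩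
  intro n hn β _ _ V G hdisj hcover hcard hpart hdeg hdiff
  by_cases hr3 : 3 ≤ r
  swap
  · -- r ≤ 2 : take H = ⊥, the divisibility condition is vacuous
    refine ⟨⊥, bot_le, ?_, ?_⟩
    · intro v
      have hb : (⊥ : SimpleGraph β).neighborSet v = ∅ := by
        ext w; simp
      rw [hb, Set.ncard_empty]
      exact_mod_cast mul_nonneg hγ.le (Nat.cast_nonneg n)
    · intro j₁ j₂ v h1 h2
      by_cases hj12 : j₁ = j₂
      · rw [hj12]
      · exfalso
        obtain ⟨j, hj⟩ := hcover v
        have hjj1 : j ≠ j₁ := fun h => h1 (h ▸ hj)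
        have hjj2 : j ≠ j₂ := fun h => h2 (h ▸ hj)
        have hcard3 : ({j, j₁, j₂} : Finset (Fin r)).card = 3 := by
          rw [card_insert_of_notMem (by simp [hjj1, hjj2]),
            card_insert_of_notMem (by simp [hj12]), card_singleton]
        have h4 := card_le_card (subset_univ ({j, j₁, j₂} : Finset (Fin r)))
        rw [hcard3, card_univ, Fintype.card_fin] at h4
        omega
  · classical
    letI hDec : DecidableRel G.Adj := Classical.decRel _
    set ε : ℝ := 2*γ/(r:ℝ) with hε
    have hr0 : (0:ℝ) < r := Nat.cast_pos.2 (by omega)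
    have hr1 : (1:ℝ) ≤ r := Nat.one_le_cast.2 hr
    have hε0 : 0 < ε := by rw [hε]; positivity
    have hε4 : ε ≤ 1/4 := by
      rw [hε, div_le_iff₀ hr0]
      linarith only [hγ8, hr1]
    have hαε : α ≤ ε^2/512 := by
      have he2 : ε^2/512 = γ^2/(128*(r:ℝ)^2) := by
        rw [hε]; field_simp; ring
      rw [he2]; exact hαle
    have hn1 : 1 ≤ n := by omega
    have hnn1 : (1:ℝ) ≤ n := Nat.one_le_cast.2 hn1
    have hnn0 : (0:ℝ) ≤ n := Nat.cast_nonneg n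
    have hn200 : 200 / ε^2 ≤ (n:ℝ) := by
      have h1 : (⌈(200:ℝ)/ε^2⌉₊ : ℝ) ≤ n := by
        have h0 : ⌈(200:ℝ)/ε^2⌉₊ ≤ n := by omega
        exact_mod_cast h0
      exact le_trans (Nat.le_ceil _) h1
    have h200 : 200 ≤ ε^2*(n:ℝ) := by
      have h1 : (200/ε^2)*ε^2 ≤ (n:ℝ)*ε^2 :=
        mul_le_mul_of_nonneg_right hn200 (by positivity)
      have h2 : (200/ε^2)*ε^2 = 200 := by field_simp
      linarith only [h1, h2]
    -- the integer parameters
    obtain ⟨A, hAdef⟩ : ∃ A : ℕ, A = ⌈α*(n:ℝ)⌉₊ := ⟨_, rfl⟩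
    have hA1 : 1 ≤ A := by rw [hAdef]; exact Nat.ceil_pos.2 (by positivity)
    have hA1' : (1:ℝ) ≤ A := Nat.one_le_cast.2 hA1
    have hAub : (A:ℝ) < α*n + 1 := by
      rw [hAdef]; exact Nat.ceil_lt_add_one (by positivity)
    have hAlb : α*(n:ℝ) ≤ A := by rw [hAdef]; exact Nat.le_ceil _
    obtain ⟨T, hTdef⟩ : ∃ T : ℕ, T = ⌈8*(A:ℝ)/ε⌉₊ := ⟨_, rfl⟩
    have hT1 : 1 ≤ T := by rw [hTdef]; exact Nat.ceil_pos.2 (div_pos (by linarith) hε0)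
    have hT1' : (1:ℝ) ≤ T := Nat.one_le_cast.2 hT1
    have hTlb : 8*(A:ℝ)/ε ≤ T := by rw [hTdef]; exact Nat.le_ceil _
    have hTub : (T:ℝ) < 8*(A:ℝ)/ε + 1 := by
      rw [hTdef]; exact Nat.ceil_lt_add_one (div_nonneg (by linarith) hε0.le)
    obtain ⟨Dc, hDcdef⟩ : ∃ Dc : ℕ, Dc = ⌈(1/2+ε)*(n:ℝ)⌉₊ := ⟨_, rfl⟩
    have hDclb : (1/2+ε)*(n:ℝ) ≤ Dc := by rw [hDcdef]; exact Nat.le_ceil _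
    have hDcub : Dc ≤ n := by
      rw [hDcdef]
      refine Nat.ceil_le.2 ?_
      have hh : (0:ℝ) ≤ (1/2 - ε)*n :=
        mul_nonneg (by linarith only [hε4]) hnn0
      linarith only [hh]
    obtain ⟨K', hK'def⟩ : ∃ K' : ℕ, K' = T + 4*A := ⟨_, rfl⟩
    have hK'c : (K':ℝ) = (T:ℝ) + 4*A := by rw [hK'def]; push_cast; ring
    have hεt : ε*(T:ℝ) < 8*A + ε := by
      calc ε*(T:ℝ) < ε*(8*A/ε + 1) := mul_lt_mul_of_pos_left hTub hε0
        _ = 8*A + ε := by field_simp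
    have hεt' : 8*(A:ℝ) ≤ ε*T := by
      calc 8*(A:ℝ) = ε*(8*A/ε) := by field_simp
        _ ≤ ε*T := mul_le_mul_of_nonneg_left hTlb hε0.le
    have hK8 : ε*(8*(K':ℝ)) ≤ ε*(ε*n) := by
      rw [hK'c]
      have hα' : 512*α ≤ ε^2 := by linarith
      have hα'' : (512*α)*(n:ℝ) ≤ ε^2*n := mul_le_mul_of_nonneg_right hα' hnn0
      have hεA : ε*(A:ℝ) ≤ (1/4)*A :=
        mul_le_mul_of_nonneg_right hε4 (by linarith only [hA1'])
      linarith only [hεt, hεA, hAub, hα'', h200, hε4]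
    have hK'le : 8*(K':ℝ) ≤ ε*n := le_of_mul_le_mul_left hK8 hε0
    have hK'Dc : 4*K' ≤ Dc := by
      have h1 : (4*(K':ℝ)) ≤ ε*n/2 := by linarith only [hK'le]
      have h2 : ε*(n:ℝ)/2 ≤ (1/2+ε)*n := by
        have hh : (0:ℝ) ≤ ε*n := mul_nonneg hε0.le hnn0
        linarith only [hh, hnn0]
      have h3 : ((4*K' : ℕ):ℝ) ≤ (Dc:ℝ) := by push_cast; linarith only [h1, h2, hDclb]
      exact_mod_cast h3
    have hKDc : K' ≤ Dc := by omega
    have hDn : Dc - K' ≤ n := le_trans (Nat.sub_le _ _) hDcub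
    have hnumR : (K':ℝ)*((n:ℝ) - ((Dc:ℝ) - K')) < (T:ℝ)*(((Dc:ℝ) - K') + 1) := by
      have hX1 : (1/2 + 7*ε/8)*(n:ℝ) ≤ (Dc:ℝ) - K' := by linarith only [hDclb, hK'le]
      have hkT : (K':ℝ) ≤ T*(1+ε/2) := by rw [hK'c]; linarith only [hεt']
      have hk0 : (0:ℝ) ≤ K' := Nat.cast_nonneg _
      have hstep1 : (K':ℝ)*((n:ℝ) - ((Dc:ℝ)-K')) ≤ K'*((1/2 - 7*ε/8)*n) :=
        mul_le_mul_of_nonneg_left (by linarith only [hX1]) hk0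
      have hpos2 : (0:ℝ) ≤ (1/2 - 7*ε/8)*n :=
        mul_nonneg (by linarith only [hε4]) hnn0
      have hstep2 : (K':ℝ)*((1/2-7*ε/8)*n) ≤ ((T:ℝ)*(1+ε/2))*((1/2-7*ε/8)*n) :=
        mul_le_mul_of_nonneg_right hkT hpos2
      have hstep3 : ((T:ℝ)*(1+ε/2))*((1/2-7*ε/8)*(n:ℝ)) ≤ T*((1/2 - ε/2)*n) := by
        have ht0 : (0:ℝ) ≤ (T:ℝ) := by linarith only [hT1']
        have htn : (0:ℝ) ≤ (T:ℝ)*n := mul_nonneg ht0 hnn0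
        have hp1 : (0:ℝ) ≤ ((T:ℝ)*n)*ε := mul_nonneg htn hε0.le
        have hp2 : (0:ℝ) ≤ (((T:ℝ)*n)*ε)*ε := mul_nonneg hp1 hε0.le
        linarith only [hp1, hp2]
      have hlast : (1/2 - ε/2)*(n:ℝ) < ((Dc:ℝ)-K') + 1 := by
        have hh : (0:ℝ) ≤ ε*n := mul_nonneg hε0.le hnn0
        linarith only [hX1, hh]
      have hstep4 : (T:ℝ)*((1/2-ε/2)*n) < T*(((Dc:ℝ)-K') + 1) :=
        mul_lt_mul_of_pos_left hlast (by linarith only [hT1'] : (0:ℝ) < T)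
      linarith only [hstep1, hstep2, hstep3, hstep4]
    have hnumN : K' * (n - (Dc - K')) < T * ((Dc - K') + 1) := by
      have hcast : ((K' * (n - (Dc - K')) : ℕ):ℝ) < ((T * ((Dc - K') + 1) : ℕ):ℝ) := by
        rw [Nat.cast_mul, Nat.cast_mul, Nat.cast_sub hDn, Nat.cast_sub hKDc,
          Nat.cast_add, Nat.cast_one, Nat.cast_sub hKDc]
        exact hnumR
      exact Nat.cast_lt.mp hcast
    -- translate the degree hypotheses to ℕ
    have hncard : ∀ (j : Fin r) (v : β),
        ((V j : Set β) ∩ G.neighborSet v).ncard = #((V j).filter (G.Adj v)) := by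
      intro j v
      rw [show ((V j : Set β) ∩ G.neighborSet v) = ↑((V j).filter (G.Adj v)) by
        ext w
        simp only [Set.mem_inter_iff, SimpleGraph.mem_neighborSet, coe_filter,
          Set.mem_setOf_eq, mem_coe]]
      exact Set.ncard_coe_finset _
    have hdegN : ∀ (j : Fin r) (v : β), v ∉ V j → Dc ≤ #((V j).filter (G.Adj v)) := by
      intro j v hv
      rw [hDcdef]
      refine Nat.ceil_le.2 ?_
      have h5 := hdeg j v hv
      rw [hncard] at h5
      linarith only [h5]
    have hdiffN : ∀ (j₁ j₂ : Fin r) (v : β), v ∉ V j₁ → v ∉ V j₂ →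
        #((V j₁).filter (G.Adj v)) ≤ #((V j₂).filter (G.Adj v)) + A := by
      intro j₁ j₂ v h1 h2
      have h3 := hdiff j₁ j₂ v h1 h2
      rw [hncard, hncard] at h3
      have h4 : (#((V j₁).filter (G.Adj v)) : ℝ) <
          ((#((V j₂).filter (G.Adj v)) + A : ℕ) : ℝ) := by
        push_cast
        have h6 := (abs_lt.1 h3).2
        linarith only [h6, hAlb]
      have h5 := Nat.cast_lt (α := ℝ) |>.mp h4
      omega
    rw [hK'def] at hK'Dc hnumN
    obtain ⟨H, hHG, hHdeg, hHdiv⟩ :=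
      Stmt6Aux.assemble hr3 V G n A T Dc hdisj hcover hcard hpart hdegN hdiffN hT1 hK'Dc hnumN
    refine ⟨H, hHG, ?_, hHdiv⟩
    intro v
    have h1 := hHdeg v
    have h2 : ((H.neighborSet v).ncard : ℝ) ≤ (((r-1) * (T + 4*A) : ℕ):ℝ) := Nat.cast_le.2 h1
    have hr' : ((r-1:ℕ):ℝ) ≤ (r:ℝ) := Nat.cast_le.2 (Nat.sub_le r 1)
    have h3 : (((r-1) * (T + 4*A) : ℕ) : ℝ) ≤ (r:ℝ) * K' := by
      calc (((r-1) * (T + 4*A) : ℕ) : ℝ) = ((r-1:ℕ):ℝ)*((T:ℝ)+4*A) := by push_cast; ring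
        _ ≤ (r:ℝ)*((T:ℝ)+4*A) :=
            mul_le_mul_of_nonneg_right hr' (by linarith only [hT1', hA1'])
        _ = (r:ℝ)*K' := by rw [hK'c]
    have h4 : (r:ℝ)*(K':ℝ) ≤ (r:ℝ)*(ε*n/8) :=
      mul_le_mul_of_nonneg_left (by linarith only [hK'le]) (le_of_lt hr0)
    have h5 : (r:ℝ)*(ε*(n:ℝ)/8) = γ*n/4 := by
      rw [hε]; field_simp; ring
    have h6 : γ*(n:ℝ)/4 ≤ γ*n := by
      have hh := mul_nonneg hγ.le hnn0
      linarith only [hh]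
    linarith only [h2, h3, h4, h5, h6]
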